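/- Let k be a field, n ≥ 1, and let M be an indecomposable n-Kronecker module which is generated by bristles but is not itself a bristle. Then Hom(M, B) = 0 for every bristle B. -/

import Mathlib

open Function

variable (k : Type*) [Field k]

/-- Indecomposability of a representation `(M₁, M₂; α₁,…,α_n)` of the
`n`-Kronecker quiver. -/
def KronIndec (n : ℕ) (M1 M2 : Type*) [AddCommGroup M1] [Module k M1]
    [AddCommGroup M2] [Module k M2] (α : Fin n → M1 →ₗ[k] M2) : Prop :=
  (Nontrivial M1 ∨ Nontrivial M2) ∧
    ∀ (U1 W1 : Submodule k M1) (U2 W2 : Submodule k M2),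
      (∀ i, U1.map (α i) ≤ U2) → (∀ i, W1.map (α i) ≤ W2) →
      IsCompl U1 W1 → IsCompl U2 W2 →
      (U1 = ⊥ ∧ U2 = ⊥) ∨ (W1 = ⊥ ∧ W2 = ⊥)

/-- `M` is isomorphic to the bristle `B(λ) = (k,k;λ₁,…,λ_n)`. -/
def IsoToBristle (n : ℕ) (M1 M2 : Type*) [AddCommGroup M1] [Module k M1]
    [AddCommGroup M2] [Module k M2] (α : Fin n → M1 →ₗ[k] M2)
    (lam : Fin n → k) : Prop :=
  ∃ (e1 : M1 ≃ₗ[k] k) (e2 : M2 ≃ₗ[k] k), ∀ i x, e2 (α i x) = lam i * e1 x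

/-- `M` is generated by bristles: there is a surjective homomorphism onto `M`
from a finite direct sum `⊕_j B(λ_j)` of bristles. -/
def GenByBristles (n : ℕ) (M1 M2 : Type*) [AddCommGroup M1] [Module k M1]
    [AddCommGroup M2] [Module k M2] (α : Fin n → M1 →ₗ[k] M2) : Prop :=
  ∃ (ι : Type) (_ : Fintype ι) (lam : ι → Fin n → k),
    (∀ j, lam j ≠ 0) ∧
    ∃ (f1 : (ι → k) →ₗ[k] M1) (f2 : (ι → k) →ₗ[k] M2),
      Surjective f1 ∧ Surjective f2 ∧
      ∀ i, (α i).comp f1 = f2.comp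
        (LinearMap.pi fun j => lam j i • LinearMap.proj j)

/-- If `M` is an indecomposable `n`-Kronecker module which is generated by
bristles but is not itself a bristle, then `Hom(M, B) = 0` for every bristle
`B = B(μ)`. -/
theorem hom_to_bristle_eq_zero (n : ℕ) (hn : 1 ≤ n)
    (M1 M2 : Type*) [AddCommGroup M1] [Module k M1] [AddCommGroup M2] [Module k M2]
    [FiniteDimensional k M1] [FiniteDimensional k M2]
    (α : Fin n → M1 →ₗ[k] M2)
    (hind : KronIndec k n M1 M2 α)
    (hgen : GenByBristles k n M1 M2 α)
    (hnb : ∀ lam : Fin n → k, lam ≠ 0 → ¬ IsoToBristle k n M1 M2 α lam) :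
    ∀ mu : Fin n → k, mu ≠ 0 →
      ∀ (g1 : M1 →ₗ[k] k) (g2 : M2 →ₗ[k] k),
        (∀ i x, g2 (α i x) = mu i * g1 x) → g1 = 0 ∧ g2 = 0 := by
  intro mu hmu g1 g2 hg
  by_contra hcon
  rw [not_and_or] at hcon
  obtain ⟨ι, _, lam, hlam, f1, f2, hf1, hf2, hcomm⟩ := hgen
  classical
  set a : ι → k := fun j => g1 (f1 (Pi.single j 1)) with ha
  set b : ι → k := fun j => g2 (f2 (Pi.single j 1)) with hb
  -- the structure maps on generators
  have hαv : ∀ i j, α i (f1 (Pi.single j 1)) = lam j i • f2 (Pi.single j 1) := by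
    intro i j
    have h0 := LinearMap.congr_fun (hcomm i) (Pi.single j 1)
    simp only [LinearMap.coe_comp, Function.comp_apply] at h0
    have harg : (LinearMap.pi fun j' => lam j' i • LinearMap.proj j' :
        (ι → k) →ₗ[k] (ι → k)) (Pi.single j 1) = lam j i • (Pi.single j 1 : ι → k) := by
      ext j'
      by_cases h : j' = j <;>
        simp [LinearMap.pi_apply, Pi.single_apply, h]
    rw [h0, harg, map_smul]
  have hrel : ∀ j i, b j * lam j i = a j * mu i := by
    intro j i
    have h1 : g2 (α i (f1 (Pi.single j 1))) = mu i * g1 (f1 (Pi.single j 1)) := hg i _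
    rw [hαv i j, map_smul, smul_eq_mul] at h1
    show g2 (f2 (Pi.single j 1)) * lam j i = g1 (f1 (Pi.single j 1)) * mu i
    rw [mul_comm, h1, mul_comm]
  have hsingle : ∀ x : ι → k, x = ∑ j, x j • (Pi.single j 1 : ι → k) := by
    intro x
    ext j'
    rw [Finset.sum_apply]
    simp [Pi.single_apply]
  have hsum1 : ∀ x : ι → k, g1 (f1 x) = ∑ j, x j * a j := by
    intro x
    conv_lhs => rw [hsingle x]
    rw [map_sum, map_sum]
    simp [smul_eq_mul, ha]
  have hsum2 : ∀ x : ι → k, g2 (f2 x) = ∑ j, x j * b j := by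
    intro x
    conv_lhs => rw [hsingle x]
    rw [map_sum, map_sum]
    simp [smul_eq_mul, hb]
  have hj : ∃ j, a j ≠ 0 ∧ b j ≠ 0 := by
    rcases hcon with h1 | h2
    · have : ∃ j, a j ≠ 0 := by
        by_contra hall
        push_neg at hall
        apply h1
        ext m
        obtain ⟨x, rfl⟩ := hf1 m
        rw [hsum1 x]
        simp [hall]
      obtain ⟨j, haj⟩ := this
      refine ⟨j, haj, fun hbj => ?_⟩
      apply hmu
      ext i
      have h := hrel j i
      rw [hbj, zero_mul] at h
      exact (mul_eq_zero.mp h.symm).resolve_left haj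
    · have : ∃ j, b j ≠ 0 := by
        by_contra hall
        push_neg at hall
        apply h2
        ext m
        obtain ⟨x, rfl⟩ := hf2 m
        rw [hsum2 x]
        simp [hall]
      obtain ⟨j, hbj⟩ := this
      refine ⟨j, fun haj => ?_, hbj⟩
      apply hlam j
      ext i
      have h := hrel j i
      rw [haj, zero_mul] at h
      exact (mul_eq_zero.mp h).resolve_left hbj
  obtain ⟨j, haj, hbj⟩ := hj
  have hgv1 : g1 (f1 (Pi.single j 1)) = a j := rfl
  have hgv2 : g2 (f2 (Pi.single j 1)) = b j := rfl
  set v1 : M1 := f1 (Pi.single j 1) with hv1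
  set v2 : M2 := f2 (Pi.single j 1) with hv2
  have hU1W1 : IsCompl (k ∙ v1) (LinearMap.ker g1) := by
    constructor
    · rw [Submodule.disjoint_def]
      intro x hx hxk
      obtain ⟨c, rfl⟩ := Submodule.mem_span_singleton.mp hx
      have hca : c * a j = 0 := by
        have := LinearMap.mem_ker.mp hxk
        rwa [map_smul, hgv1, smul_eq_mul] at this
      rcases mul_eq_zero.mp hca with h | h
      · rw [h, zero_smul]
      · exact absurd h haj
    · rw [codisjoint_iff, eq_top_iff]
      intro x _
      refine Submodule.mem_sup.mpr ⟨(g1 x * (a j)⁻¹) • v1,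
        Submodule.mem_span_singleton.mpr ⟨_, rfl⟩, x - (g1 x * (a j)⁻¹) • v1, ?_, by abel⟩
      rw [LinearMap.mem_ker, map_sub, map_smul, hgv1, smul_eq_mul]
      field_simp
      simp
  have hU2W2 : IsCompl (k ∙ v2) (LinearMap.ker g2) := by
    constructor
    · rw [Submodule.disjoint_def]
      intro x hx hxk
      obtain ⟨c, rfl⟩ := Submodule.mem_span_singleton.mp hx
      have hcb : c * b j = 0 := by
        have := LinearMap.mem_ker.mp hxk
        rwa [map_smul, hgv2, smul_eq_mul] at this
      rcases mul_eq_zero.mp hcb with h | h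
      · rw [h, zero_smul]
      · exact absurd h hbj
    · rw [codisjoint_iff, eq_top_iff]
      intro x _
      refine Submodule.mem_sup.mpr ⟨(g2 x * (b j)⁻¹) • v2,
        Submodule.mem_span_singleton.mpr ⟨_, rfl⟩, x - (g2 x * (b j)⁻¹) • v2, ?_, by abel⟩
      rw [LinearMap.mem_ker, map_sub, map_smul, hgv2, smul_eq_mul]
      field_simp
      simp
  have hUmap : ∀ i, (k ∙ v1).map (α i) ≤ (k ∙ v2) := by
    intro i x hx
    obtain ⟨y, hy, rfl⟩ := Submodule.mem_map.mp hx
    obtain ⟨c, rfl⟩ := Submodule.mem_span_singleton.mp hy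
    rw [map_smul, hαv i j]
    exact Submodule.mem_span_singleton.mpr ⟨c * lam j i, by rw [mul_smul]⟩
  have hWmap : ∀ i, (LinearMap.ker g1).map (α i) ≤ LinearMap.ker g2 := by
    intro i x hx
    obtain ⟨y, hy, rfl⟩ := Submodule.mem_map.mp hx
    rw [LinearMap.mem_ker, hg i y, LinearMap.mem_ker.mp hy, mul_zero]
  rcases hind.2 (k ∙ v1) (LinearMap.ker g1) (k ∙ v2) (LinearMap.ker g2)
      hUmap hWmap hU1W1 hU2W2 with ⟨h1, _⟩ | ⟨h1, h2⟩
  · apply haj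
    have hz : v1 = 0 := by
      have := h1 ▸ Submodule.mem_span_singleton_self v1
      simpa using this
    rw [← hgv1, hz, map_zero]
  · have hinj1 : Function.Injective g1 := LinearMap.ker_eq_bot.mp h1
    have hinj2 : Function.Injective g2 := LinearMap.ker_eq_bot.mp h2
    have hsurj1 : Function.Surjective g1 := by
      intro c
      refine ⟨(c * (a j)⁻¹) • v1, ?_⟩
      rw [map_smul, hgv1, smul_eq_mul]
      field_simp
    have hsurj2 : Function.Surjective g2 := by
      intro c
      refine ⟨(c * (b j)⁻¹) • v2, ?_⟩
      rw [map_smul, hgv2, smul_eq_mul]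
      field_simp
    exact hnb mu hmu ⟨LinearEquiv.ofBijective g1 ⟨hinj1, hsurj1⟩,
      LinearEquiv.ofBijective g2 ⟨hinj2, hsurj2⟩, fun i x => hg i x⟩
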